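/- (Curvature-dependent ellipsoidal approximation bound, the lemma underlying Theorem 4.) Let V be a finite ground set, let f : 2^V → ℝ be a polymatroid function with f({j}) > 0 for all j ∈ V, let κ_f be its total curvature with 0 < κ_f ≤ 1, and let f^κ(X) = ( f(X) − (1 − κ_f)·Σ_{j∈X} f({j}) ) / κ_f be its κ_f-curve-normalized version. Suppose w : V → ℝ₊ is a nonnegative weight function with w(X) = Σ_{j∈X} w(j) and α ≥ 1 is such that √(w(X)) ≤ f^κ(X) ≤ α·√(w(X)) for all X ⊆ V. Define f^{ea}(X) = κ_f·√(w(X)) + (1 − κ_f)·Σ_{j∈X} f({j}). Then for all X ⊆ V, f^{ea}(X) ≤ f(X) ≤ ( α / (1 + (α − 1)(1 − κ_f)) ) · f^{ea}(X). -/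

import Mathlib

/-- curvature-dependent ellipsoidal approximation bound (the lemma
underlying Theorem 4). If `w` is an `α`-ellipsoidal approximation of the
curve-normalized function `f^κ`, then
`f^{ea}(X) = κ·√(w(X)) + (1−κ)·Σ_{j∈X} f({j})` satisfies
`f^{ea}(X) ≤ f(X) ≤ (α / (1 + (α−1)(1−κ)))·f^{ea}(X)` for all `X`. -/
theorem curvature_ellipsoidal_approximation
    {V : Type*} [Fintype V] [DecidableEq V] [Nonempty V]
    (f : Finset V → ℝ)
    (hfsub : ∀ S T : Finset V, f (S ∪ T) + f (S ∩ T) ≤ f S + f T)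
    (hfmono : ∀ S T : Finset V, S ⊆ T → f S ≤ f T)
    (hfnorm : f ∅ = 0)
    (hfpos : ∀ j : V, 0 < f {j})
    (κ : ℝ)
    (hκ : κ = 1 - Finset.univ.inf' Finset.univ_nonempty
      (fun j : V => (f Finset.univ - f (Finset.univ \ {j})) / f {j}))
    (hκ₀ : 0 < κ) (hκ₁ : κ ≤ 1)
    (fκ : Finset V → ℝ)
    (hfκ : ∀ X : Finset V, fκ X = (f X - (1 - κ) * ∑ j ∈ X, f {j}) / κ)
    (w : V → ℝ) (hw_nonneg : ∀ j : V, 0 ≤ w j)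
    (α : ℝ) (hα : 1 ≤ α)
    (hea : ∀ X : Finset V,
      Real.sqrt (∑ j ∈ X, w j) ≤ fκ X ∧ fκ X ≤ α * Real.sqrt (∑ j ∈ X, w j))
    (fea : Finset V → ℝ)
    (hfea : ∀ X : Finset V,
      fea X = κ * Real.sqrt (∑ j ∈ X, w j) + (1 - κ) * ∑ j ∈ X, f {j}) :
    ∀ X : Finset V,
      fea X ≤ f X ∧ f X ≤ (α / (1 + (α - 1) * (1 - κ))) * fea X := by
  have hκne : κ ≠ 0 := ne_of_gt hκ₀
  have hnonneg : ∀ S : Finset V, 0 ≤ f S := by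
    intro S
    have := hfmono ∅ S (Finset.empty_subset S)
    linarith [hfnorm ▸ this]
  have hsub : ∀ X : Finset V, f X ≤ ∑ j ∈ X, f {j} := by
    intro X
    induction X using Finset.induction_on with
    | empty => simp [hfnorm]
    | @insert a X ha ih =>
      have h := hfsub {a} X
      have hu : ({a} : Finset V) ∪ X = insert a X := by
        ext x; simp [Finset.mem_insert, or_comm]
      have hi : ({a} : Finset V) ∩ X = ∅ := by
        ext x; simp; rintro rfl; exact ha
      rw [hu, hi, hfnorm] at h
      rw [Finset.sum_insert ha]
      linarith
  intro X
  set s := Real.sqrt (∑ j ∈ X, w j) with hs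
  set F := ∑ j ∈ X, f {j} with hF
  have hs0 : 0 ≤ s := Real.sqrt_nonneg _
  have h1 : s ≤ fκ X := (hea X).1
  have h2 : fκ X ≤ α * s := (hea X).2
  have hfX : f X = κ * fκ X + (1 - κ) * F := by
    rw [hfκ X]; field_simp
    rw [← hF]; ring
  have h3 : fκ X ≤ F := by
    have := hsub X
    rw [hfX] at this
    nlinarith
  have hD : 0 < 1 + (α - 1) * (1 - κ) := by nlinarith
  constructor
  · rw [hfea, hfX]
    nlinarith
  · rw [hfea, hfX, div_mul_eq_mul_div, le_div_iff₀ hD]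
    nlinarith [mul_nonneg hκ₀.le (sub_nonneg.2 h2),
      mul_nonneg (mul_nonneg (mul_nonneg hκ₀.le (by linarith : (0:ℝ) ≤ α - 1))
        (by linarith : (0:ℝ) ≤ 1 - κ)) (sub_nonneg.2 h3)]
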